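/- arXiv:math/0507106 — 2 statements merged into one kernel-verified Lean document; each statement's English description precedes it below -/
import Mathlib

section
/- Let H be a ℤ/2-graded supercommutative associative unital ℂ-algebra with odd linear operators Q, G₋ : H → H satisfying Q² = G₋² = QG₋ + G₋Q = 0, where Q satisfies the Leibniz rule Q(ab) = Q(a)b + (−1)^{|a|}aQ(b); let H = H₀ ⊕ H₄ be a Hodge decomposition with QH₀ = G₋H₀ = 0 and H₄ having a homogeneous basis consisting of quadruples e_α, Qe_α, G₋e_α, QG₋e_α; let G₊ be defined by G₊H₀ = 0, G₊e_α = G₊G₋e_α = 0, G₊Qe_α = e_α, G₊QG₋e_α = G₋e_α; and let ∫ : H → ℂ be an even linear integral with ∫Q(a)b = (−1)^{|a|+1}∫aQ(b) and ∫G₊(a)b = (−1)^{|a|}∫aG₊(b) for homogeneous a. Assume H₀ is contained in the even part of H, is finite-dimensional with basis e₁, …, e_s, and that the Gram matrix g_{ij} = ∫ e_i e_j is invertible with inverse (g^{ij}). Then for all a, b, c, d ∈ H₀: Σ_{i,j} g^{ij} (∫ a b e_i)(∫ e_j c d) = ∫ abcd. In particular the left-hand side is invariant under interchanging b and c, which is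 the constant term (in the variables T) of the WDVV equation for the Barannikov–Kontsevich potential F₀^{sm}. -/
theorem stmt_9
    {H : Type*} [Ring H] [Algebra ℂ H]
    (Heven Hodd : Submodule ℂ H) (hgr : IsCompl Heven Hodd)
    (h1e : (1 : H) ∈ Heven)
    (hmul_ee : ∀ a ∈ Heven, ∀ b ∈ Heven, a * b ∈ Heven)
    (hmul_eo : ∀ a ∈ Heven, ∀ b ∈ Hodd, a * b ∈ Hodd)
    (hmul_oe : ∀ a ∈ Hodd, ∀ b ∈ Heven, a * b ∈ Hodd)
    (hmul_oo : ∀ a ∈ Hodd, ∀ b ∈ Hodd, a * b ∈ Heven)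
    (hsc_ee : ∀ a ∈ Heven, ∀ b ∈ Heven, a * b = b * a)
    (hsc_eo : ∀ a ∈ Heven, ∀ b ∈ Hodd, a * b = b * a)
    (hsc_oo : ∀ a ∈ Hodd, ∀ b ∈ Hodd, a * b = -(b * a))
    (Q Gm : H →ₗ[ℂ] H)
    (hQo : ∀ x ∈ Heven, Q x ∈ Hodd) (hQo' : ∀ x ∈ Hodd, Q x ∈ Heven)
    (hGmo : ∀ x ∈ Heven, Gm x ∈ Hodd) (hGmo' : ∀ x ∈ Hodd, Gm x ∈ Heven)
    (hQ2 : Q ∘ₗ Q = 0) (hGm2 : Gm ∘ₗ Gm = 0) (hQGm : Q ∘ₗ Gm + Gm ∘ₗ Q = 0)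
    (hLeib_e : ∀ a ∈ Heven, ∀ b : H, Q (a * b) = Q a * b + a * Q b)
    (hLeib_o : ∀ a ∈ Hodd, ∀ b : H, Q (a * b) = Q a * b - a * Q b)
    (H0 H4 : Submodule ℂ H) (hHodge : IsCompl H0 H4)
    (hQH0 : ∀ x ∈ H0, Q x = 0) (hGmH0 : ∀ x ∈ H0, Gm x = 0)
    {ι : Type*} (e : ι → H)
    (he_hom : ∀ α, e α ∈ Heven ∨ e α ∈ Hodd)
    (b : Module.Basis (ι × Fin 4) ℂ H4)
    (hb0 : ∀ α, (b (α, 0) : H) = e α)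
    (hb1 : ∀ α, (b (α, 1) : H) = Q (e α))
    (hb2 : ∀ α, (b (α, 2) : H) = Gm (e α))
    (hb3 : ∀ α, (b (α, 3) : H) = Q (Gm (e α)))
    (Gp : H →ₗ[ℂ] H)
    (hGpo : ∀ x ∈ Heven, Gp x ∈ Hodd) (hGpo' : ∀ x ∈ Hodd, Gp x ∈ Heven)
    (hGpH0 : ∀ x ∈ H0, Gp x = 0)
    (hGpe : ∀ α, Gp (e α) = 0)
    (hGpGme : ∀ α, Gp (Gm (e α)) = 0)
    (hGpQe : ∀ α, Gp (Q (e α)) = e α)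
    (hGpQGme : ∀ α, Gp (Q (Gm (e α))) = Gm (e α))
    (I : H →ₗ[ℂ] ℂ) (hIeven : ∀ x ∈ Hodd, I x = 0)
    (hIQ_e : ∀ a ∈ Heven, ∀ b : H, I (Q a * b) = - I (a * Q b))
    (hIQ_o : ∀ a ∈ Hodd, ∀ b : H, I (Q a * b) = I (a * Q b))
    (hIGp_e : ∀ a ∈ Heven, ∀ b : H, I (Gp a * b) = I (a * Gp b))
    (hIGp_o : ∀ a ∈ Hodd, ∀ b : H, I (Gp a * b) = - I (a * Gp b))
    (hH0even : H0 ≤ Heven)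
    {s : ℕ} (v : Fin s → H)
    (bv : Module.Basis (Fin s) ℂ H0) (hbv : ∀ i, (bv i : H) = v i)
    (g ginv : Matrix (Fin s) (Fin s) ℂ)
    (hg : ∀ i j, g i j = I (v i * v j))
    (hginv : g * ginv = 1) (hginv' : ginv * g = 1)
    :
    ∀ a ∈ H0, ∀ b ∈ H0, ∀ c ∈ H0, ∀ d ∈ H0,
      (∑ i, ∑ j, ginv i j * I (a * b * v i) * I (v j * c * d) = I (a * b * c * d)) ∧
      (∑ i, ∑ j, ginv i j * I (a * b * v i) * I (v j * c * d) =
        ∑ i, ∑ j, ginv i j * I (a * c * v i) * I (v j * b * d)) := by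

  -- Q ∘ Q = 0 pointwise
  have hQ2' : ∀ z : H, Q (Q z) = 0 := by
    intro z
    have := LinearMap.ext_iff.mp hQ2 z
    simpa using this
  -- integral of an exact element against a closed element vanishes
  have hIQ : ∀ u y : H, Q y = 0 → I (Q u * y) = 0 := by
    intro u y hy
    obtain ⟨ue, hue, uo, huo, hsum⟩ := Submodule.mem_sup.mp
      (by rw [hgr.sup_eq_top]; exact Submodule.mem_top : u ∈ Heven ⊔ Hodd)
    rw [← hsum, map_add, add_mul, map_add, hIQ_e ue hue y, hIQ_o uo huo y, hy]
    simp
  -- the homotopy identity on H4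
  have hH4id : ∀ h ∈ H4, Q (Gp h) + Gp (Q h) = h := by
    intro h hh
    have hspan : h ∈ Submodule.span ℂ (Set.range fun k => (b k : H)) := by
      have hz : (⟨h, hh⟩ : H4) ∈ (⊤ : Submodule ℂ H4) := Submodule.mem_top
      rw [← b.span_eq] at hz
      have h2 := Submodule.mem_map_of_mem (f := H4.subtype) hz
      rw [Submodule.map_span] at h2
      simpa [← Set.range_comp, Function.comp_def] using h2
    clear hh
    induction hspan using Submodule.span_induction with
    | mem x hx =>
      obtain ⟨⟨α, i⟩, rfl⟩ := hx
      fin_cases i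
      · show Q (Gp ((b (α, 0) : H))) + Gp (Q ((b (α, 0) : H))) = (b (α, 0) : H)
        rw [hb0, hGpe, map_zero, hGpQe, zero_add]
      · show Q (Gp ((b (α, 1) : H))) + Gp (Q ((b (α, 1) : H))) = (b (α, 1) : H)
        rw [hb1, hGpQe, hQ2', map_zero, add_zero]
      · show Q (Gp ((b (α, 2) : H))) + Gp (Q ((b (α, 2) : H))) = (b (α, 2) : H)
        rw [hb2, hGpGme, map_zero, hGpQGme, zero_add]
      · show Q (Gp ((b (α, 3) : H))) + Gp (Q ((b (α, 3) : H))) = (b (α, 3) : H)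
        rw [hb3, hGpQGme, hQ2', map_zero, add_zero]
    | zero => simp
    | add x y _ _ hpx hpy =>
      rw [map_add, map_add, map_add, map_add, add_add_add_comm, hpx, hpy]
    | smul r x _ hpx => rw [map_smul, map_smul, map_smul, map_smul, ← smul_add, hpx]
  -- closed elements of H4 are exact, hence integrate to zero against closed elements
  have vanish : ∀ z ∈ H4, Q z = 0 → ∀ y : H, Q y = 0 → I (z * y) = 0 := by
    intro z hz hQz y hy
    have h1 : Q (Gp z) = z := by
      have := hH4id z hz
      rwa [hQz, map_zero, add_zero] at this
    rw [← h1]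
    exact hIQ _ _ hy
  have hvmem : ∀ i, v i ∈ H0 := fun i => hbv i ▸ (bv i).2
  have hQv : ∀ i, Q (v i) = 0 := fun i => hQH0 _ (hvmem i)
  -- the main identity
  have key : ∀ a' ∈ H0, ∀ b' ∈ H0, ∀ c' ∈ H0, ∀ d' ∈ H0,
      ∑ i, ∑ j, ginv i j * I (a' * b' * v i) * I (v j * c' * d') = I (a' * b' * c' * d') := by
    intro a' ha' b' hb' c' hc' d' hd'
    have hQab : Q (a' * b') = 0 := by
      rw [hLeib_e a' (hH0even ha') b', hQH0 a' ha', hQH0 b' hb', zero_mul, mul_zero, add_zero]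
    have hQcd : Q (c' * d') = 0 := by
      rw [hLeib_e c' (hH0even hc') d', hQH0 c' hc', hQH0 d' hd', zero_mul, mul_zero, add_zero]
    obtain ⟨x0, hx0, x4, hx4, hxeq⟩ := Submodule.mem_sup.mp
      (by rw [hHodge.sup_eq_top]; exact Submodule.mem_top : a' * b' ∈ H0 ⊔ H4)
    have hQx4 : Q x4 = 0 := by
      have hx4eq : x4 = a' * b' - x0 := by rw [← hxeq, add_sub_cancel_left]
      rw [hx4eq, map_sub, hQab, hQH0 x0 hx0, sub_zero]
    have hIx4 : ∀ y' : H, Q y' = 0 → I (x4 * y') = 0 := fun y' hy' => vanish x4 hx4 hQx4 y' hy'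
    set p : Fin s → ℂ := fun k => (bv.repr ⟨x0, hx0⟩) k with hp
    have hx0sum : x0 = ∑ k, p k • v k := by
      have h := bv.sum_repr ⟨x0, hx0⟩
      have h2 := congrArg (Submodule.subtype H0) h
      simp only [map_sum, map_smul, Submodule.coe_subtype] at h2
      simp only [hbv] at h2
      exact h2.symm
    -- the pairing of a'*b' with v i
    have hX : ∀ i, I (a' * b' * v i) = ∑ k, p k * g k i := by
      intro i
      rw [← hxeq, add_mul, map_add, hIx4 (v i) (hQv i), add_zero, hx0sum,
        Finset.sum_mul, map_sum]
      refine Finset.sum_congr rfl fun k _ => ?_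
      rw [smul_mul_assoc, map_smul, smul_eq_mul, ← hg k i]
    set w : Fin s → ℂ := fun j => I (v j * c' * d') with hwdef
    have hw : ∀ k, ∑ i, g k i * (∑ j, ginv i j * w j) = w k := by
      intro k
      have h1 : Matrix.mulVec g (Matrix.mulVec ginv w) = w := by
        rw [Matrix.mulVec_mulVec, hginv, Matrix.one_mulVec]
      calc ∑ i, g k i * (∑ j, ginv i j * w j) = (Matrix.mulVec g (Matrix.mulVec ginv w)) k := by
            simp [Matrix.mulVec, dotProduct]
        _ = w k := by rw [h1]
    calc ∑ i, ∑ j, ginv i j * I (a' * b' * v i) * I (v j * c' * d')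
        = ∑ i, (∑ k, p k * g k i) * (∑ j, ginv i j * w j) := by
          refine Finset.sum_congr rfl fun i _ => ?_
          rw [Finset.mul_sum]
          refine Finset.sum_congr rfl fun j _ => ?_
          rw [hX i]; ring
      _ = ∑ i, ∑ k, p k * (g k i * (∑ j, ginv i j * w j)) := by
          refine Finset.sum_congr rfl fun i _ => ?_
          rw [Finset.sum_mul]
          exact Finset.sum_congr rfl fun k _ => by ring
      _ = ∑ k, ∑ i, p k * (g k i * (∑ j, ginv i j * w j)) := Finset.sum_comm
      _ = ∑ k, p k * (∑ i, g k i * (∑ j, ginv i j * w j)) :=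
          Finset.sum_congr rfl fun k _ => (Finset.mul_sum _ _ _).symm
      _ = ∑ k, p k * w k := by
          refine Finset.sum_congr rfl fun k _ => ?_
          rw [hw k]
      _ = I (x0 * c' * d') := by
          rw [hx0sum, Finset.sum_mul, Finset.sum_mul, map_sum]
          refine (Finset.sum_congr rfl fun k _ => ?_).symm
          rw [smul_mul_assoc, smul_mul_assoc, map_smul, smul_eq_mul]
      _ = I (a' * b' * c' * d') := by
          rw [← hxeq, add_mul, add_mul, map_add]
          have : I (x4 * c' * d') = 0 := by
            rw [mul_assoc]; exact hIx4 _ hQcd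
          rw [this, add_zero]
  intro a ha b2 hb2 c hc d hd
  refine ⟨key a ha b2 hb2 c hc d hd, ?_⟩
  rw [key a ha b2 hb2 c hc d hd, key a ha c hc b2 hb2 d hd]
  have hcomm : a * b2 * c = a * c * b2 := by
    rw [mul_assoc, hsc_ee b2 (hH0even hb2) c (hH0even hc), ← mul_assoc]
  rw [hcomm]
end

section
/- Let H be a ℤ/2-graded supercommutative associative unital ℂ-algebra with odd linear operators Q, G₋ : H → H satisfying Q² = G₋² = QG₋ + G₋Q = 0, a Hodge decomposition H = H₀ ⊕ H₄ where QH₀ = G₋H₀ = 0 and H₄ has a homogeneous basis consisting of quadruples e_α, Qe_α, G₋e_α, QG₋e_α, the odd operator G₊ defined by G₊H₀ = 0, G₊e_α = G₊G₋e_α = 0, G₊Qe_α = e_α, G₊QG₋e_α = G₋e_α, and an even linear integral ∫ : H → ℂ satisfying ∫G₋(a)b = (−1)^{|a|}∫aG₋(b) and ∫G₊(a)b = (−1)^{|a|}∫aG₊(b) for homogeneous a. Define the four-point function W(x,y,z,w) = ∫ xy·G₋G₊(zw) + ∫ xz·G₋G₊(yw) + ∫ xw·G₋G₊(yz). Then for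 all even x, y, z, w ∈ H, W(x,y,z,w) is invariant under every permutation of its four arguments. -/
/-- The four-point function `W(x,y,z,w) = ∫xy·G₋G₊(zw) + ∫xz·G₋G₊(yw) + ∫xw·G₋G₊(yz)`. -/
noncomputable def Wfun {H : Type*} [Ring H] [Algebra ℂ H]
    (I : H →ₗ[ℂ] ℂ) (Gm Gp : H →ₗ[ℂ] H) (x y z w : H) : ℂ :=
  I (x * y * Gm (Gp (z * w))) + I (x * z * Gm (Gp (y * w))) + I (x * w * Gm (Gp (y * z)))

theorem stmt_13
    {H : Type*} [Ring H] [Algebra ℂ H]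
    (Heven Hodd : Submodule ℂ H) (hgr : IsCompl Heven Hodd)
    (h1e : (1 : H) ∈ Heven)
    (hmul_ee : ∀ a ∈ Heven, ∀ b ∈ Heven, a * b ∈ Heven)
    (hmul_eo : ∀ a ∈ Heven, ∀ b ∈ Hodd, a * b ∈ Hodd)
    (hmul_oe : ∀ a ∈ Hodd, ∀ b ∈ Heven, a * b ∈ Hodd)
    (hmul_oo : ∀ a ∈ Hodd, ∀ b ∈ Hodd, a * b ∈ Heven)
    (hsc_ee : ∀ a ∈ Heven, ∀ b ∈ Heven, a * b = b * a)
    (hsc_eo : ∀ a ∈ Heven, ∀ b ∈ Hodd, a * b = b * a)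
    (hsc_oo : ∀ a ∈ Hodd, ∀ b ∈ Hodd, a * b = -(b * a))
    (Q Gm : H →ₗ[ℂ] H)
    (hQo : ∀ x ∈ Heven, Q x ∈ Hodd) (hQo' : ∀ x ∈ Hodd, Q x ∈ Heven)
    (hGmo : ∀ x ∈ Heven, Gm x ∈ Hodd) (hGmo' : ∀ x ∈ Hodd, Gm x ∈ Heven)
    (hQ2 : Q ∘ₗ Q = 0) (hGm2 : Gm ∘ₗ Gm = 0) (hQGm : Q ∘ₗ Gm + Gm ∘ₗ Q = 0)
    (H0 H4 : Submodule ℂ H) (hHodge : IsCompl H0 H4)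
    (hQH0 : ∀ x ∈ H0, Q x = 0) (hGmH0 : ∀ x ∈ H0, Gm x = 0)
    {ι : Type*} (e : ι → H)
    (he_hom : ∀ α, e α ∈ Heven ∨ e α ∈ Hodd)
    (b : Module.Basis (ι × Fin 4) ℂ H4)
    (hb0 : ∀ α, (b (α, 0) : H) = e α)
    (hb1 : ∀ α, (b (α, 1) : H) = Q (e α))
    (hb2 : ∀ α, (b (α, 2) : H) = Gm (e α))
    (hb3 : ∀ α, (b (α, 3) : H) = Q (Gm (e α)))
    (Gp : H →ₗ[ℂ] H)
    (hGpo : ∀ x ∈ Heven, Gp x ∈ Hodd) (hGpo' : ∀ x ∈ Hodd, Gp x ∈ Heven)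
    (hGpH0 : ∀ x ∈ H0, Gp x = 0)
    (hGpe : ∀ α, Gp (e α) = 0)
    (hGpGme : ∀ α, Gp (Gm (e α)) = 0)
    (hGpQe : ∀ α, Gp (Q (e α)) = e α)
    (hGpQGme : ∀ α, Gp (Q (Gm (e α))) = Gm (e α))
    (I : H →ₗ[ℂ] ℂ) (hIeven : ∀ x ∈ Hodd, I x = 0)
    (hIGm_e : ∀ a ∈ Heven, ∀ b : H, I (Gm a * b) = I (a * Gm b))
    (hIGm_o : ∀ a ∈ Hodd, ∀ b : H, I (Gm a * b) = - I (a * Gm b))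
    (hIGp_e : ∀ a ∈ Heven, ∀ b : H, I (Gp a * b) = I (a * Gp b))
    (hIGp_o : ∀ a ∈ Hodd, ∀ b : H, I (Gp a * b) = - I (a * Gp b))
    :
    ∀ w : Fin 4 → H, (∀ i, w i ∈ Heven) →
      ∀ σ : Equiv.Perm (Fin 4),
        Wfun I Gm Gp (w (σ 0)) (w (σ 1)) (w (σ 2)) (w (σ 3)) =
          Wfun I Gm Gp (w 0) (w 1) (w 2) (w 3) := by
  intro w hw σ
  -- Gm and Gp anticommute: first, pointwise consequences of the operator identities
  have hGm2' : ∀ v : H, Gm (Gm v) = 0 := fun v => by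
    simpa using LinearMap.congr_fun hGm2 v
  have hGmQ : ∀ v : H, Gm (Q v) = - Q (Gm v) := fun v => by
    have h := LinearMap.congr_fun hQGm v
    simp only [LinearMap.add_apply, LinearMap.comp_apply, LinearMap.zero_apply] at h
    exact eq_neg_of_add_eq_zero_right h
  -- Gm ∘ Gp + Gp ∘ Gm = 0 on H4
  have hH4span : H4 = Submodule.span ℂ (Set.range (fun i => (b i : H))) := by
    conv_lhs => rw [← Submodule.range_subtype H4, ← Submodule.map_top, ← b.span_eq,
      Submodule.map_span]
    rw [← Set.range_comp]
    rfl
  have hK4 : ∀ v ∈ H4, Gm (Gp v) + Gp (Gm v) = 0 := by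
    intro v hv
    rw [hH4span] at hv
    induction hv using Submodule.span_induction with
    | mem x hx =>
      obtain ⟨⟨α, j⟩, rfl⟩ := hx
      fin_cases j
      · show Gm (Gp ((b (α, 0) : H))) + Gp (Gm ((b (α, 0) : H))) = 0
        rw [hb0, hGpe, map_zero, hGpGme, add_zero]
      · show Gm (Gp ((b (α, 1) : H))) + Gp (Gm ((b (α, 1) : H))) = 0
        rw [hb1, hGpQe, hGmQ, map_neg, hGpQGme, add_neg_cancel]
      · show Gm (Gp ((b (α, 2) : H))) + Gp (Gm ((b (α, 2) : H))) = 0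
        rw [hb2, hGpGme, map_zero, hGm2', map_zero, add_zero]
      · show Gm (Gp ((b (α, 3) : H))) + Gp (Gm ((b (α, 3) : H))) = 0
        rw [hb3, hGpQGme, hGm2', hGmQ, hGm2', map_zero, neg_zero, map_zero, add_zero]
    | zero => simp
    | add x y hx hy ihx ihy =>
      rw [map_add, map_add, map_add, map_add, add_add_add_comm, ihx, ihy, add_zero]
    | smul a x hx ihx =>
      rw [map_smul, map_smul, map_smul, map_smul, ← smul_add, ihx, smul_zero]
  have hKall : ∀ v : H, Gm (Gp v) + Gp (Gm v) = 0 := by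
    intro v
    have hv : v ∈ H0 ⊔ H4 := by rw [hHodge.sup_eq_top]; trivial
    obtain ⟨a, ha, c, hc, rfl⟩ := Submodule.mem_sup.mp hv
    have h0 : Gm (Gp a) + Gp (Gm a) = 0 := by
      rw [hGpH0 a ha, hGmH0 a ha, map_zero, map_zero, add_zero]
    have h4 := hK4 c hc
    rw [map_add, map_add, map_add, map_add, add_add_add_comm, h0, h4, add_zero]
  have hK : ∀ v : H, Gp (Gm v) = - Gm (Gp v) := fun v =>
    eq_neg_of_add_eq_zero_right (hKall v)
  -- key symmetry lemma for the 2-point pairing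
  have key : ∀ a ∈ Heven, ∀ c ∈ Heven, I (a * Gm (Gp c)) = I (c * Gm (Gp a)) := by
    intro a ha c hc
    have hGpc : Gp c ∈ Hodd := hGpo c hc
    have hGmGpc : Gm (Gp c) ∈ Heven := hGmo' _ hGpc
    rw [hsc_ee a ha _ hGmGpc, hIGm_o _ hGpc a, hIGp_e c hc (Gm a), hK a, mul_neg, map_neg,
      neg_neg]
  -- evenness of products
  -- the three elementary swaps
  have L1 : ∀ x ∈ Heven, ∀ y ∈ Heven, ∀ z ∈ Heven, ∀ u ∈ Heven,
      Wfun I Gm Gp y x z u = Wfun I Gm Gp x y z u := by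
    intro x hx y hy z hz u hu
    unfold Wfun
    rw [hsc_ee y hy x hx,
      key (y * z) (hmul_ee y hy z hz) (x * u) (hmul_ee x hx u hu),
      key (y * u) (hmul_ee y hy u hu) (x * z) (hmul_ee x hx z hz)]
    ring
  have L2 : ∀ x ∈ Heven, ∀ y ∈ Heven, ∀ z ∈ Heven, ∀ u ∈ Heven,
      Wfun I Gm Gp x z y u = Wfun I Gm Gp x y z u := by
    intro x hx y hy z hz u hu
    unfold Wfun
    rw [hsc_ee z hz y hy]
    ring
  have L3 : ∀ x ∈ Heven, ∀ y ∈ Heven, ∀ z ∈ Heven, ∀ u ∈ Heven,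
      Wfun I Gm Gp x y u z = Wfun I Gm Gp x y z u := by
    intro x hx y hy z hz u hu
    unfold Wfun
    rw [hsc_ee u hu z hz]
    ring
  -- full symmetry under arbitrary swaps of the four arguments
  have swapLem : ∀ (a : Fin 4 → H), (∀ i, a i ∈ Heven) → ∀ x y : Fin 4,
      Wfun I Gm Gp (a (Equiv.swap x y 0)) (a (Equiv.swap x y 1))
        (a (Equiv.swap x y 2)) (a (Equiv.swap x y 3)) =
      Wfun I Gm Gp (a 0) (a 1) (a 2) (a 3) := by
    intro a ha x y
    have h01 : Wfun I Gm Gp (a 1) (a 0) (a 2) (a 3) = Wfun I Gm Gp (a 0) (a 1) (a 2) (a 3) :=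
      L1 _ (ha 0) _ (ha 1) _ (ha 2) _ (ha 3)
    have h12 : Wfun I Gm Gp (a 0) (a 2) (a 1) (a 3) = Wfun I Gm Gp (a 0) (a 1) (a 2) (a 3) :=
      L2 _ (ha 0) _ (ha 1) _ (ha 2) _ (ha 3)
    have h23 : Wfun I Gm Gp (a 0) (a 1) (a 3) (a 2) = Wfun I Gm Gp (a 0) (a 1) (a 2) (a 3) :=
      L3 _ (ha 0) _ (ha 1) _ (ha 2) _ (ha 3)
    have h02 : Wfun I Gm Gp (a 2) (a 1) (a 0) (a 3) = Wfun I Gm Gp (a 0) (a 1) (a 2) (a 3) :=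
      calc Wfun I Gm Gp (a 2) (a 1) (a 0) (a 3)
          = Wfun I Gm Gp (a 2) (a 0) (a 1) (a 3) :=
            L2 _ (ha 2) _ (ha 0) _ (ha 1) _ (ha 3)
        _ = Wfun I Gm Gp (a 0) (a 2) (a 1) (a 3) :=
            L1 _ (ha 0) _ (ha 2) _ (ha 1) _ (ha 3)
        _ = Wfun I Gm Gp (a 0) (a 1) (a 2) (a 3) := h12
    have h03 : Wfun I Gm Gp (a 3) (a 1) (a 2) (a 0) = Wfun I Gm Gp (a 0) (a 1) (a 2) (a 3) :=
      calc Wfun I Gm Gp (a 3) (a 1) (a 2) (a 0)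
          = Wfun I Gm Gp (a 3) (a 1) (a 0) (a 2) :=
            L3 _ (ha 3) _ (ha 1) _ (ha 0) _ (ha 2)
        _ = Wfun I Gm Gp (a 3) (a 0) (a 1) (a 2) :=
            L2 _ (ha 3) _ (ha 0) _ (ha 1) _ (ha 2)
        _ = Wfun I Gm Gp (a 0) (a 3) (a 1) (a 2) :=
            L1 _ (ha 0) _ (ha 3) _ (ha 1) _ (ha 2)
        _ = Wfun I Gm Gp (a 0) (a 1) (a 3) (a 2) :=
            L2 _ (ha 0) _ (ha 1) _ (ha 3) _ (ha 2)
        _ = Wfun I Gm Gp (a 0) (a 1) (a 2) (a 3) := h23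
    have h13 : Wfun I Gm Gp (a 0) (a 3) (a 2) (a 1) = Wfun I Gm Gp (a 0) (a 1) (a 2) (a 3) :=
      calc Wfun I Gm Gp (a 0) (a 3) (a 2) (a 1)
          = Wfun I Gm Gp (a 0) (a 2) (a 3) (a 1) :=
            L2 _ (ha 0) _ (ha 2) _ (ha 3) _ (ha 1)
        _ = Wfun I Gm Gp (a 0) (a 2) (a 1) (a 3) :=
            L3 _ (ha 0) _ (ha 2) _ (ha 1) _ (ha 3)
        _ = Wfun I Gm Gp (a 0) (a 1) (a 2) (a 3) := h12
    fin_cases x <;> fin_cases y <;>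
      simp only [Equiv.swap_self, Equiv.refl_apply, Equiv.swap_apply_def] <;>
      norm_num <;>
      first
        | rfl
        | exact h01 | exact h02 | exact h03 | exact h12 | exact h13 | exact h23
  -- induction over the permutation, via transpositions
  refine Equiv.Perm.swap_induction_on' σ rfl ?_
  intro f x y hxy ih
  calc Wfun I Gm Gp (w ((f * Equiv.swap x y) 0)) (w ((f * Equiv.swap x y) 1))
          (w ((f * Equiv.swap x y) 2)) (w ((f * Equiv.swap x y) 3))
        = Wfun I Gm Gp (w (f 0)) (w (f 1)) (w (f 2)) (w (f 3)) := by
          simpa only [Equiv.Perm.mul_apply] using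
            swapLem (fun i => w (f i)) (fun i => hw (f i)) x y
      _ = Wfun I Gm Gp (w 0) (w 1) (w 2) (w 3) := ih
end
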